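/- Let μ > 0, 1 ≤ p < +∞, n ∈ ℕ with n ≥ 1, and let f ∈ L^p_μ([0,1]). Then ‖𝓛ₙᴷ f‖_{p,μ}^p ≤ (1 + 1/((n+1)(1+μ))) ‖f‖_{p,μ}^p; in particular ‖𝓛ₙᴷ f‖_{p,μ}^p ≤ K_μ ‖f‖_{p,μ}^p, where K_μ := 1 + 1/(1+μ). -/

import Mathlib

open MeasureTheory Filter Set

/-- The logarithmic weight `ln_μ(x) = ln(1+μ+x)`. -/
noncomputable def lnMu (μ x : ℝ) : ℝ := Real.log (1 + μ + x)

/-- The function `a_{n+1}(x)` from the paper. -/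
noncomputable def aFun (μ : ℝ) (n : ℕ) (x : ℝ) : ℝ :=
  Real.log (1 + x / (((n : ℝ) + 1) * (1 + μ))) /
    Real.log (1 + 1 / (((n : ℝ) + 1) * (1 + μ)))

/-- Bernstein basis polynomial `p_{n,k}(x) = C(n,k) x^k (1-x)^{n-k}`. -/
noncomputable def bern (n k : ℕ) (x : ℝ) : ℝ :=
  (n.choose k : ℝ) * x ^ k * (1 - x) ^ (n - k)

/-- The Kantorovich logarithmic operator `𝓛ₙᴷ(f,x)`. -/
noncomputable def LK (μ : ℝ) (n : ℕ) (f : ℝ → ℝ) (x : ℝ) : ℝ :=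
  lnMu μ x * ∑ k ∈ Finset.range (n + 1),
    bern n k (aFun μ n x) * ((n : ℝ) + 1) *
      ∫ t in ((k : ℝ) / ((n : ℝ) + 1))..(((k : ℝ) + 1) / ((n : ℝ) + 1)), f t / lnMu μ t

/-- `γ_n := max_{x ∈ [0,1]} |a_{n+1}(x) - x|`. -/
noncomputable def gammaN (μ : ℝ) (n : ℕ) : ℝ :=
  ⨆ x : Set.Icc (0 : ℝ) 1, |aFun μ n (x : ℝ) - (x : ℝ)|

/-- Unweighted L^p norm `(∫₀¹ |f|^p)^(1/p)` on [0,1]. -/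
noncomputable def normP (p : ℝ) (f : ℝ → ℝ) : ℝ :=
  (∫ x in (0:ℝ)..1, |f x| ^ p) ^ (1 / p)

/-- Weighted L^p norm `(∫₀¹ |f/ln_μ|^p)^(1/p)` on [0,1]. -/
noncomputable def normPMu (μ p : ℝ) (f : ℝ → ℝ) : ℝ :=
  (∫ x in (0:ℝ)..1, |f x / lnMu μ x| ^ p) ^ (1 / p)

section Aux

lemma beta_nat : ∀ (m k : ℕ), ∫ x in (0:ℝ)..1, x ^ k * (1 - x) ^ m
    = (k.factorial * m.factorial : ℝ) / (k + m + 1).factorial := by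
  intro m
  induction m with
  | zero =>
    intro k
    simp only [pow_zero, mul_one]
    rw [integral_pow]
    simp only [Nat.factorial, Nat.add_zero, one_pow]
    have hk : (k.factorial : ℝ) ≠ 0 := by positivity
    push_cast [Nat.succ_eq_add_one]
    norm_num
    field_simp
  | succ m ih =>
    intro k
    have hder : ∀ x ∈ uIcc (0:ℝ) 1, HasDerivAt (fun x : ℝ => x ^ (k+1) * (1-x) ^ (m+1))
        (((k:ℝ)+1) * x ^ k * (1-x)^(m+1) - ((m:ℝ)+1) * (x ^ (k+1) * (1-x)^m)) x := by
      intro x _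
      have h1 : HasDerivAt (fun x : ℝ => x ^ (k+1)) (((k:ℝ)+1) * x ^ k) x := by
        simpa using (hasDerivAt_pow (k+1) x)
      have h2 : HasDerivAt (fun x : ℝ => (1-x) ^ (m+1)) (-(((m:ℝ)+1) * (1-x) ^ m)) x := by
        have h3 : HasDerivAt (fun x : ℝ => (1-x)) (-1) x := by
          simpa using (hasDerivAt_id x).const_sub 1
        have := (hasDerivAt_pow (m+1) (1-x)).comp x h3
        exact this.congr_deriv (by push_cast; ring)
      have := h1.mul h2
      refine this.congr_deriv ?_
      push_cast
      ring
    have hcont : ContinuousOn (fun x : ℝ => ((k:ℝ)+1) * x ^ k * (1-x)^(m+1) - ((m:ℝ)+1) * (x ^ (k+1) * (1-x)^m)) (uIcc (0:ℝ) 1) := by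
      fun_prop
    have hFTC := intervalIntegral.integral_eq_sub_of_hasDerivAt hder
      (hcont.intervalIntegrable)
    simp only [one_pow, sub_self, zero_pow, mul_zero, zero_mul, Nat.add_eq] at hFTC
    have h0 : (1:ℝ)^(k+1) * (1-1)^(m+1) - (0:ℝ)^(k+1)*(1-0)^(m+1) = 0 := by
      norm_num
    have hIk : IntervalIntegrable (fun x : ℝ => ((k:ℝ)+1) * (x ^ k * (1-x)^(m+1))) volume 0 1 := by
      apply ContinuousOn.intervalIntegrable; fun_prop
    have hIm : IntervalIntegrable (fun x : ℝ => ((m:ℝ)+1) * (x ^ (k+1) * (1-x)^m)) volume 0 1 := by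
      apply ContinuousOn.intervalIntegrable; fun_prop
    have key : ((k:ℝ)+1) * (∫ x in (0:ℝ)..1, x ^ k * (1-x)^(m+1))
        = ((m:ℝ)+1) * ∫ x in (0:ℝ)..1, x ^ (k+1) * (1-x)^m := by
      have := intervalIntegral.integral_sub hIk hIm
      rw [intervalIntegral.integral_const_mul, intervalIntegral.integral_const_mul] at this
      have heq : (fun x : ℝ => ((k:ℝ)+1) * (x ^ k * (1-x)^(m+1)) - ((m:ℝ)+1) * (x ^ (k+1) * (1-x)^m))
          = (fun x : ℝ => ((k:ℝ)+1) * x ^ k * (1-x)^(m+1) - ((m:ℝ)+1) * (x ^ (k+1) * (1-x)^m)) := by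
        funext x; ring
      rw [heq, hFTC] at this
      norm_num at this
      linarith [this]
    have hk1 : ((k:ℝ)+1) ≠ 0 := by positivity
    have := ih (k+1)
    rw [this] at key
    have : (∫ x in (0:ℝ)..1, x ^ k * (1-x)^(m+1))
        = ((m:ℝ)+1) * ((↑(k+1).factorial * ↑m.factorial : ℝ) / ↑(k+1+m+1).factorial) / ((k:ℝ)+1) := by
      field_simp at key ⊢
      linarith [key]
    rw [this]
    have e1 : (k+1+m+1) = (k + (m+1) + 1) := by ring
    rw [e1]
    rw [Nat.factorial_succ (k), Nat.factorial_succ (m)]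
    push_cast
    have : ((k:ℝ) + (m:ℝ) + 2) ≠ 0 := by positivity
    field_simp


lemma convexOn_abs_rpow {p : ℝ} (hp : 1 ≤ p) : ConvexOn ℝ univ (fun x : ℝ => |x| ^ p) := by
  have himg : (fun x : ℝ => |x|) '' (univ : Set ℝ) = Ici 0 := by
    ext y; simp only [image_univ, mem_range, mem_Ici]
    constructor
    · rintro ⟨x, rfl⟩; exact abs_nonneg x
    · intro hy; exact ⟨y, abs_of_nonneg hy⟩
  have hg : ConvexOn ℝ ((fun x : ℝ => |x|) '' (univ : Set ℝ)) (fun x : ℝ => x ^ p) := by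
    rw [himg]; exact convexOn_rpow hp
  have hmono : MonotoneOn (fun x : ℝ => x ^ p) ((fun x : ℝ => |x|) '' (univ : Set ℝ)) := by
    rw [himg]
    intro x hx y _ hxy
    exact Real.rpow_le_rpow hx hxy (le_trans zero_le_one hp)
  have habs : ConvexOn ℝ univ (fun x : ℝ => |x|) := by
    exact convexOn_univ_norm (E := ℝ)
  exact hg.comp habs hmono

lemma jensen_avg {p : ℝ} (hp : 1 ≤ p) {a b : ℝ} (hab : a < b) (g : ℝ → ℝ)
    (hg : IntegrableOn g (Ioc a b)) (hg2 : IntegrableOn (fun t => |g t| ^ p) (Ioc a b)) :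
    |(b - a)⁻¹ * ∫ t in Ioc a b, g t| ^ p ≤ (b - a)⁻¹ * ∫ t in Ioc a b, |g t| ^ p := by
  set ν : Measure ℝ := (ENNReal.ofReal (b - a)⁻¹) • (volume.restrict (Ioc a b)) with hν
  have hba : 0 < b - a := by linarith
  haveI : IsProbabilityMeasure ν := by
    constructor
    rw [hν]
    simp only [Measure.smul_apply, Measure.restrict_apply MeasurableSet.univ, univ_inter,
      Real.volume_Ioc, smul_eq_mul]
    rw [← ENNReal.ofReal_mul (by positivity)]
    rw [inv_mul_cancel₀ (ne_of_gt hba)]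
    exact ENNReal.ofReal_one
  have hne : ENNReal.ofReal (b - a)⁻¹ ≠ ⊤ := ENNReal.ofReal_ne_top
  have hgi : Integrable g ν := hg.smul_measure hne
  have hgi2 : Integrable ((fun x : ℝ => |x| ^ p) ∘ g) ν := hg2.smul_measure hne
  have hconv := convexOn_abs_rpow hp
  have hcont : ContinuousOn (fun x : ℝ => |x| ^ p) univ :=
    (continuous_abs.rpow_const (fun x => Or.inr (le_trans zero_le_one hp))).continuousOn
  have := hconv.map_integral_le hcont isClosed_univ
    (Filter.Eventually.of_forall (fun x => mem_univ _)) hgi hgi2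
  have hint : ∫ x, g x ∂ν = (b - a)⁻¹ * ∫ t in Ioc a b, g t := by
    rw [hν, integral_smul_measure, ENNReal.toReal_ofReal (by positivity), smul_eq_mul]
  have hint2 : ∫ x, |g x| ^ p ∂ν = (b - a)⁻¹ * ∫ t in Ioc a b, |g t| ^ p := by
    rw [hν, integral_smul_measure, ENNReal.toReal_ofReal (by positivity), smul_eq_mul]
  rw [hint, hint2] at this
  exact this



variable {μ : ℝ} {n : ℕ}

lemma lnMu_pos (hμ : 0 < μ) {x : ℝ} (hx : 0 ≤ x) : 0 < lnMu μ x := by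
  unfold lnMu
  apply Real.log_pos
  linarith

lemma cpos (hμ : 0 < μ) : 0 < ((n : ℝ) + 1) * (1 + μ) := by positivity

lemma Lpos (hμ : 0 < μ) : 0 < Real.log (1 + 1 / (((n : ℝ) + 1) * (1 + μ))) := by
  apply Real.log_pos
  have := cpos (μ := μ) (n := n) hμ
  have : 0 < 1 / (((n : ℝ) + 1) * (1 + μ)) := by positivity
  linarith

lemma aFun_mem (hμ : 0 < μ) {x : ℝ} (hx : x ∈ Icc (0:ℝ) 1) : aFun μ n x ∈ Icc (0:ℝ) 1 := by
  have hc := cpos (μ := μ) (n := n) hμ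
  have hL := Lpos (μ := μ) (n := n) hμ
  unfold aFun
  have h0 := hx.1
  have h1 := hx.2
  constructor
  · apply div_nonneg _ hL.le
    apply Real.log_nonneg
    have : 0 ≤ x / (((n : ℝ) + 1) * (1 + μ)) := by positivity
    linarith
  · rw [div_le_one hL]
    apply Real.log_le_log (by positivity)
    have h : x / (((n : ℝ) + 1) * (1 + μ)) ≤ 1 / (((n : ℝ) + 1) * (1 + μ)) := by
      gcongr
    linarith

lemma aFun_zero (hμ : 0 < μ) : aFun μ n 0 = 0 := by
  unfold aFun; simp

lemma aFun_one (hμ : 0 < μ) : aFun μ n 1 = 1 := by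
  unfold aFun
  exact div_self (ne_of_gt (Lpos hμ))

lemma aFun_contOn (hμ : 0 < μ) : ContinuousOn (aFun μ n) (Icc (0:ℝ) 1) := by
  have hc := cpos (μ := μ) (n := n) hμ
  unfold aFun
  apply ContinuousOn.div_const
  apply ContinuousOn.log
  · fun_prop
  · intro x hx
    have h0 : (0:ℝ) ≤ x := hx.1
    have : 0 ≤ x / (((n : ℝ) + 1) * (1 + μ)) := by positivity
    positivity

lemma bern_cont (k : ℕ) : Continuous (bern n k) := by unfold bern; fun_prop

lemma bern_nonneg {k : ℕ} {y : ℝ} (hy : y ∈ Icc (0:ℝ) 1) : 0 ≤ bern n k y := by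
  unfold bern
  have h1 := hy.1
  have h2 := hy.2
  have : (0:ℝ) ≤ 1 - y := by linarith
  positivity

lemma bern_sum {y : ℝ} : ∑ k ∈ Finset.range (n + 1), bern n k y = 1 := by
  unfold bern
  have h := add_pow y (1 - y) n
  simp only [add_sub_cancel, one_pow] at h
  refine Eq.trans (Finset.sum_congr rfl fun k _ => by ring) h.symm

lemma aFun_hasDeriv (hμ : 0 < μ) {x : ℝ} (hx : 0 ≤ x) :
    HasDerivAt (aFun μ n)
      (1 / (Real.log (1 + 1 / (((n : ℝ) + 1) * (1 + μ))) * ((((n : ℝ) + 1) * (1 + μ)) + x))) x := by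
  have hc := cpos (μ := μ) (n := n) hμ
  have hL := Lpos (μ := μ) (n := n) hμ
  set c := ((n : ℝ) + 1) * (1 + μ)
  have h1 : HasDerivAt (fun x : ℝ => 1 + x / c) (1 / c) x := by
    simpa [one_div] using ((hasDerivAt_id x).div_const c).const_add 1
  have hpos : 1 + x / c > 0 := by positivity
  have h2 : HasDerivAt (fun x : ℝ => Real.log (1 + x / c)) ((1 / c) / (1 + x / c)) x :=
    h1.log (ne_of_gt hpos)
  have h3 := h2.div_const (Real.log (1 + 1 / c))
  refine h3.congr_deriv ?_
  field_simp

lemma integral_bern {k : ℕ} (hkn : k ≤ n) :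
    ∫ u in (0:ℝ)..1, bern n k u = 1 / ((n : ℝ) + 1) := by
  unfold bern
  have : (fun u : ℝ => (n.choose k : ℝ) * u ^ k * (1 - u) ^ (n - k))
      = (fun u : ℝ => (n.choose k : ℝ) * (u ^ k * (1 - u) ^ (n - k))) := by
    funext u; ring
  rw [this, intervalIntegral.integral_const_mul, beta_nat (n - k) k]
  have he : k + (n - k) + 1 = n + 1 := by omega
  rw [he]
  have hch := Nat.choose_mul_factorial_mul_factorial hkn
  have hfact : ((n+1).factorial : ℝ) = ((n:ℝ)+1) * (n.factorial : ℝ) := by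
    rw [Nat.factorial_succ]; push_cast; ring
  rw [hfact]
  have hc : ((n.choose k : ℝ)) * ((k.factorial : ℝ) * ((n-k).factorial : ℝ)) = (n.factorial : ℝ) := by
    rw [← hch]; push_cast; ring
  have hnf : (n.factorial : ℝ) ≠ 0 := by positivity
  field_simp
  linear_combination hc

lemma bern_aFun_integral_le (hμ : 0 < μ) {k : ℕ} (hkn : k ≤ n) :
    ∫ x in (0:ℝ)..1, bern n k (aFun μ n x)
      ≤ (1 + 1 / (((n:ℝ)+1)*(1+μ))) * (1 / ((n:ℝ)+1)) := by
  have hc := cpos (μ := μ) (n := n) hμ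
  have hL := Lpos (μ := μ) (n := n) hμ
  set c := ((n : ℝ) + 1) * (1 + μ) with hcdef
  set L := Real.log (1 + 1 / c) with hLdef
  set a' : ℝ → ℝ := fun x => 1 / (L * (c + x)) with ha'
  have huIcc : uIcc (0:ℝ) 1 = Icc (0:ℝ) 1 := uIcc_of_le zero_le_one
  have hderiv : ∀ x ∈ uIcc (0:ℝ) 1, HasDerivAt (aFun μ n) (a' x) x := by
    intro x hx
    rw [huIcc] at hx
    exact aFun_hasDeriv hμ hx.1
  have ha'cont : ContinuousOn a' (uIcc (0:ℝ) 1) := by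
    rw [huIcc]
    apply ContinuousOn.div continuousOn_const
    · fun_prop
    · intro x hx
      have h0 := hx.1
      have : 0 < c + x := by linarith
      positivity
  have hsub : ∫ x in (0:ℝ)..1, a' x • bern n k (aFun μ n x)
      = ∫ u in (aFun μ n 0)..(aFun μ n 1), bern n k u :=
    intervalIntegral.integral_comp_smul_deriv hderiv ha'cont (bern_cont k)
  rw [aFun_zero hμ, aFun_one hμ, integral_bern hkn] at hsub
  have hcont_ba : ContinuousOn (fun x => bern n k (aFun μ n x)) (Icc (0:ℝ) 1) :=
    (bern_cont k).comp_continuousOn (aFun_contOn hμ)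
  have hle : ∀ x ∈ Icc (0:ℝ) 1,
      bern n k (aFun μ n x) ≤ (1 + 1/c) * (a' x • bern n k (aFun μ n x)) := by
    intro x hx
    have h0 := hx.1
    have h1 := hx.2
    have hb : 0 ≤ bern n k (aFun μ n x) := bern_nonneg (aFun_mem hμ hx)
    have hcx : 0 < c + x := by linarith
    have hLle : L ≤ 1 / c := by
      have := Real.log_le_sub_one_of_pos (show (0:ℝ) < 1 + 1/c by positivity)
      simpa [hLdef, one_div] using this
    have hkey : L * (c + x) ≤ 1 + 1/c := by
      have h2 : L * (c + x) ≤ (1/c) * (c + 1) :=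
        mul_le_mul hLle (by linarith) hcx.le (by positivity)
      have h3 : (1/c) * (c + 1) = 1 + 1/c := by field_simp
      linarith
    have h4 : 1 ≤ (1 + 1/c) * a' x := by
      rw [ha']
      rw [mul_one_div, le_div_iff₀ (by positivity)]
      linarith
    calc bern n k (aFun μ n x) = 1 * bern n k (aFun μ n x) := (one_mul _).symm
      _ ≤ ((1 + 1/c) * a' x) * bern n k (aFun μ n x) := by
          apply mul_le_mul_of_nonneg_right h4 hb
      _ = (1 + 1/c) * (a' x • bern n k (aFun μ n x)) := by
          simp [smul_eq_mul]; ring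
  have hint1 : IntervalIntegrable (fun x => bern n k (aFun μ n x)) volume 0 1 := by
    apply ContinuousOn.intervalIntegrable; rwa [huIcc]
  have hint2 : IntervalIntegrable (fun x => (1 + 1/c) * (a' x • bern n k (aFun μ n x))) volume 0 1 := by
    apply ContinuousOn.intervalIntegrable
    rw [huIcc]
    apply ContinuousOn.mul continuousOn_const
    apply ContinuousOn.smul (f := a') _ hcont_ba
    rw [← huIcc]; exact ha'cont
  have := intervalIntegral.integral_mono_on zero_le_one hint1 hint2 hle
  calc ∫ x in (0:ℝ)..1, bern n k (aFun μ n x)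
      ≤ ∫ x in (0:ℝ)..1, (1 + 1/c) * (a' x • bern n k (aFun μ n x)) := this
    _ = (1 + 1/c) * ∫ x in (0:ℝ)..1, a' x • bern n k (aFun μ n x) := by
        rw [intervalIntegral.integral_const_mul]
    _ = (1 + 1/c) * (1 / ((n:ℝ)+1)) := by rw [hsub]

end Aux

theorem stmt6 (μ p : ℝ) (hμ : 0 < μ) (hp : 1 ≤ p) (n : ℕ) (hn : 1 ≤ n) (f : ℝ → ℝ)
    (hf : MemLp (fun x => f x / lnMu μ x) (ENNReal.ofReal p)
      (volume.restrict (Set.Icc (0:ℝ) 1))) :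
    normPMu μ p (LK μ n f) ^ p ≤
        (1 + 1 / (((n : ℝ) + 1) * (1 + μ))) * normPMu μ p f ^ p ∧
      normPMu μ p (LK μ n f) ^ p ≤ (1 + 1 / (1 + μ)) * normPMu μ p f ^ p := by
  have hp0 : (0:ℝ) < p := lt_of_lt_of_le one_pos hp
  have hc : 0 < ((n : ℝ) + 1) * (1 + μ) := cpos hμ
  set N : ℝ := (n : ℝ) + 1 with hN
  have hNpos : (0:ℝ) < N := by rw [hN]; positivity
  set g : ℝ → ℝ := fun t => f t / lnMu μ t with hgdef
  -- integrability of g and |g|^p on [0,1]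
  haveI : IsFiniteMeasure (volume.restrict (Icc (0:ℝ) 1)) := by
    constructor
    rw [Measure.restrict_apply MeasurableSet.univ, univ_inter, Real.volume_Icc]
    norm_num
  have hgInt : IntegrableOn g (Icc (0:ℝ) 1) := by
    refine MemLp.integrable ?_ hf
    rw [← ENNReal.ofReal_one]
    exact ENNReal.ofReal_le_ofReal hp
  have hgpInt : IntegrableOn (fun t => |g t| ^ p) (Icc (0:ℝ) 1) := by
    have := hf.integrable_norm_rpow (by simp [hp0]) ENNReal.ofReal_ne_top
    simpa [IntegrableOn, Real.norm_eq_abs, ENNReal.toReal_ofReal hp0.le] using this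
  -- endpoints
  have hkN : ∀ k : ℕ, k ≤ n + 1 → (k:ℝ)/N ∈ Icc (0:ℝ) 1 := by
    intro k hk
    constructor
    · positivity
    · rw [div_le_one hNpos, hN]
      exact_mod_cast hk
  have hablt : ∀ k : ℕ, (k:ℝ)/N < ((k:ℝ)+1)/N := by
    intro k
    gcongr
    linarith
  have hIocsub : ∀ k : ℕ, k ≤ n → Ioc ((k:ℝ)/N) (((k:ℝ)+1)/N) ⊆ Icc (0:ℝ) 1 := by
    intro k hk
    have h1 := (hkN k (by omega)).1
    have h2 : ((k:ℝ)+1)/N ≤ 1 := by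
      have : ((k:ℝ)+1) = ((k+1 : ℕ) : ℝ) := by push_cast; ring
      rw [this]
      exact (hkN (k+1) (by omega)).2
    intro t ht
    exact ⟨le_trans h1 ht.1.le, le_trans ht.2 h2⟩
  have hgIntI : ∀ k : ℕ, k ≤ n → IntegrableOn g (Ioc ((k:ℝ)/N) (((k:ℝ)+1)/N)) :=
    fun k hk => hgInt.mono_set (hIocsub k hk)
  have hgpIntI : ∀ k : ℕ, k ≤ n → IntegrableOn (fun t => |g t| ^ p) (Ioc ((k:ℝ)/N) (((k:ℝ)+1)/N)) :=
    fun k hk => hgpInt.mono_set (hIocsub k hk)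
  have hba : ∀ k : ℕ, (((k:ℝ)+1)/N - (k:ℝ)/N) = 1/N := by
    intro k
    field_simp
    ring
  -- the sums S (value) and H (majorant)
  set S : ℝ → ℝ := fun x => ∑ k ∈ Finset.range (n + 1),
    bern n k (aFun μ n x) * (N * ∫ t in ((k:ℝ)/N)..(((k:ℝ)+1)/N), g t) with hSdef
  set H : ℝ → ℝ := fun x => ∑ k ∈ Finset.range (n + 1),
    bern n k (aFun μ n x) * (N * ∫ t in ((k:ℝ)/N)..(((k:ℝ)+1)/N), |g t| ^ p) with hHdef
  -- LK/ln = S on [0,1]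
  have hLKS : ∀ x ∈ Icc (0:ℝ) 1, LK μ n f x / lnMu μ x = S x := by
    intro x hx
    have hln : lnMu μ x ≠ 0 := ne_of_gt (lnMu_pos hμ hx.1)
    rw [LK, mul_comm, mul_div_assoc, div_self hln, mul_one]
    rw [hSdef]
    apply Finset.sum_congr rfl
    intro k hk
    rw [hN, hgdef]
    ring
  -- pointwise bound |S x|^p ≤ H x on [0,1]
  have hpoint : ∀ x ∈ Icc (0:ℝ) 1, |S x| ^ p ≤ H x := by
    intro x hx
    simp only [hSdef, hHdef]
    have hmem := aFun_mem (n := n) hμ hx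
    have hw : ∀ k ∈ Finset.range (n+1), 0 ≤ bern n k (aFun μ n x) :=
      fun k _ => bern_nonneg (n := n) (k := k) hmem
    have hconv := convexOn_abs_rpow hp
    have j1 := hconv.map_sum_le
      (p := fun k : ℕ => N * ∫ t in ((k:ℝ)/N)..(((k:ℝ)+1)/N), g t)
      hw (bern_sum (n := n) (y := aFun μ n x)) (fun k _ => mem_univ _)
    simp only [smul_eq_mul] at j1
    refine le_trans j1 ?_
    apply Finset.sum_le_sum
    intro k hk
    have hkn : k ≤ n := by
      have := Finset.mem_range.mp hk; omega
    apply mul_le_mul_of_nonneg_left _ (hw k hk)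
    -- |N * ∫ g|^p ≤ N * ∫ |g|^p
    have hj := jensen_avg hp (hablt k) g (hgIntI k hkn) (hgpIntI k hkn)
    rw [hba k] at hj
    rw [one_div, inv_inv] at hj
    rw [intervalIntegral.integral_of_le (hablt k).le,
      intervalIntegral.integral_of_le (hablt k).le]
    exact hj
  -- continuity facts
  have hScont : ContinuousOn S (Icc (0:ℝ) 1) := by
    rw [hSdef]
    apply continuousOn_finset_sum
    intro k _
    exact (((bern_cont k).comp_continuousOn (aFun_contOn hμ)).mul continuousOn_const)
  have hHcont : ContinuousOn H (Icc (0:ℝ) 1) := by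
    rw [hHdef]
    apply continuousOn_finset_sum
    intro k _
    exact (((bern_cont k).comp_continuousOn (aFun_contOn hμ)).mul continuousOn_const)
  have huIcc : uIcc (0:ℝ) 1 = Icc (0:ℝ) 1 := uIcc_of_le zero_le_one
  have hSpcont : ContinuousOn (fun x => |S x| ^ p) (Icc (0:ℝ) 1) :=
    (hScont.abs).rpow_const (fun x _ => Or.inr hp0.le)
  -- rewrite the LHS integral
  have hLHS : normPMu μ p (LK μ n f) ^ p = ∫ x in (0:ℝ)..1, |S x| ^ p := by
    have hcongr : ∫ x in (0:ℝ)..1, |LK μ n f x / lnMu μ x| ^ p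
        = ∫ x in (0:ℝ)..1, |S x| ^ p := by
      apply intervalIntegral.integral_congr
      intro x hx
      rw [huIcc] at hx
      show |LK μ n f x / lnMu μ x| ^ p = |S x| ^ p
      rw [hLKS x hx]
    rw [normPMu, hcongr]
    have hnn : 0 ≤ ∫ x in (0:ℝ)..1, |S x| ^ p :=
      intervalIntegral.integral_nonneg zero_le_one (fun x _ => by positivity)
    rw [← Real.rpow_mul hnn, one_div_mul_cancel (ne_of_gt hp0), Real.rpow_one]
  -- rewrite the RHS integral
  have hRHS : normPMu μ p f ^ p = ∫ x in (0:ℝ)..1, |g x| ^ p := by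
    rw [normPMu]
    have heq : (fun x => |f x / lnMu μ x| ^ p) = fun x => |g x| ^ p := by
      rw [hgdef]
    rw [heq]
    have hnn : 0 ≤ ∫ x in (0:ℝ)..1, |g x| ^ p :=
      intervalIntegral.integral_nonneg zero_le_one (fun x _ => by positivity)
    rw [← Real.rpow_mul hnn, one_div_mul_cancel (ne_of_gt hp0), Real.rpow_one]
  -- step 3 : integrate the pointwise bound
  have step3 : (∫ x in (0:ℝ)..1, |S x| ^ p) ≤ ∫ x in (0:ℝ)..1, H x := by
    apply intervalIntegral.integral_mono_on zero_le_one
      (ContinuousOn.intervalIntegrable (by rwa [huIcc]))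
      (ContinuousOn.intervalIntegrable (by rwa [huIcc])) hpoint
  -- interval integrability of |g|^p on each subinterval
  have hII : ∀ k : ℕ, k ≤ n →
      IntervalIntegrable (fun t => |g t| ^ p) volume ((k:ℝ)/N) (((k:ℝ)+1)/N) := by
    intro k hk
    rw [intervalIntegrable_iff_integrableOn_Ioc_of_le (hablt k).le]
    exact hgpIntI k hk
  have hJnn : ∀ k : ℕ, 0 ≤ ∫ t in ((k:ℝ)/N)..(((k:ℝ)+1)/N), |g t| ^ p :=
    fun k => intervalIntegral.integral_nonneg (hablt k).le (fun t _ => by positivity)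
  -- step 4 : bound the integral of H
  have hsum_adj : ∑ k ∈ Finset.range (n+1), (∫ t in ((k:ℝ)/N)..(((k:ℝ)+1)/N), |g t| ^ p)
      = ∫ x in (0:ℝ)..1, |g x| ^ p := by
    have hint : ∀ k, k < n+1 → IntervalIntegrable (fun t => |g t| ^ p) volume
        (((k:ℕ):ℝ)/N) (((k+1:ℕ):ℝ)/N) := by
      intro k hk
      have : (((k+1:ℕ)):ℝ)/N = ((k:ℝ)+1)/N := by push_cast; ring_nf
      rw [this]
      exact hII k (by omega)
    have := intervalIntegral.sum_integral_adjacent_intervals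
      (a := fun k : ℕ => ((k:ℕ):ℝ)/N) (n := n+1) hint
    have h1 : ((n:ℝ)+1)/N = 1 := by
      rw [← hN]; exact div_self (ne_of_gt hNpos)
    simp only [Nat.cast_zero, zero_div, Nat.cast_add, Nat.cast_one, h1] at this
    rw [← this]
  have step4 : (∫ x in (0:ℝ)..1, H x)
      ≤ (1 + 1 / (N * (1 + μ))) * ∫ x in (0:ℝ)..1, |g x| ^ p := by
    have hintk : ∀ k ∈ Finset.range (n+1), IntervalIntegrable
        (fun x => bern n k (aFun μ n x) * (N * ∫ t in ((k:ℝ)/N)..(((k:ℝ)+1)/N), |g t| ^ p))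
        volume 0 1 := by
      intro k _
      apply ContinuousOn.intervalIntegrable
      rw [huIcc]
      exact (((bern_cont k).comp_continuousOn (aFun_contOn hμ)).mul continuousOn_const)
    have hHsplit : (∫ x in (0:ℝ)..1, H x) = ∑ k ∈ Finset.range (n+1),
        (∫ x in (0:ℝ)..1, bern n k (aFun μ n x))
          * (N * ∫ t in ((k:ℝ)/N)..(((k:ℝ)+1)/N), |g t| ^ p) := by
      simp only [hHdef]
      rw [intervalIntegral.integral_finset_sum hintk]
      apply Finset.sum_congr rfl
      intro k _
      rw [intervalIntegral.integral_mul_const]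
    rw [hHsplit]
    have hterm : ∀ k ∈ Finset.range (n+1),
        (∫ x in (0:ℝ)..1, bern n k (aFun μ n x))
            * (N * ∫ t in ((k:ℝ)/N)..(((k:ℝ)+1)/N), |g t| ^ p)
          ≤ (1 + 1 / (N * (1 + μ)))
            * ∫ t in ((k:ℝ)/N)..(((k:ℝ)+1)/N), |g t| ^ p := by
      intro k hk
      have hkn : k ≤ n := by have := Finset.mem_range.mp hk; omega
      have hb := bern_aFun_integral_le (μ := μ) (n := n) hμ hkn
      rw [← hN] at hb
      have hnn2 : 0 ≤ N * ∫ t in ((k:ℝ)/N)..(((k:ℝ)+1)/N), |g t| ^ p := by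
        have := hJnn k; positivity
      calc (∫ x in (0:ℝ)..1, bern n k (aFun μ n x))
            * (N * ∫ t in ((k:ℝ)/N)..(((k:ℝ)+1)/N), |g t| ^ p)
          ≤ ((1 + 1 / (N * (1 + μ))) * (1/N))
            * (N * ∫ t in ((k:ℝ)/N)..(((k:ℝ)+1)/N), |g t| ^ p) :=
            mul_le_mul_of_nonneg_right hb hnn2
        _ = (1 + 1 / (N * (1 + μ)))
            * ∫ t in ((k:ℝ)/N)..(((k:ℝ)+1)/N), |g t| ^ p := by
            have hN0 : N ≠ 0 := ne_of_gt hNpos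
            field_simp
    calc ∑ k ∈ Finset.range (n+1), (∫ x in (0:ℝ)..1, bern n k (aFun μ n x))
          * (N * ∫ t in ((k:ℝ)/N)..(((k:ℝ)+1)/N), |g t| ^ p)
        ≤ ∑ k ∈ Finset.range (n+1), (1 + 1 / (N * (1 + μ)))
          * ∫ t in ((k:ℝ)/N)..(((k:ℝ)+1)/N), |g t| ^ p := Finset.sum_le_sum hterm
      _ = (1 + 1 / (N * (1 + μ))) * ∑ k ∈ Finset.range (n+1),
          ∫ t in ((k:ℝ)/N)..(((k:ℝ)+1)/N), |g t| ^ p := by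
          rw [Finset.mul_sum]
      _ = (1 + 1 / (N * (1 + μ))) * ∫ x in (0:ℝ)..1, |g x| ^ p := by rw [hsum_adj]
  -- conclusion
  have main1 : normPMu μ p (LK μ n f) ^ p
      ≤ (1 + 1 / (N * (1 + μ))) * normPMu μ p f ^ p := by
    rw [hLHS, hRHS]
    exact le_trans step3 step4
  refine ⟨main1, le_trans main1 ?_⟩
  have hX : 0 ≤ normPMu μ p f ^ p := by
    rw [hRHS]
    exact intervalIntegral.integral_nonneg zero_le_one (fun x _ => by positivity)
  apply mul_le_mul_of_nonneg_right _ hX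
  have h1μ : (0:ℝ) < 1 + μ := by linarith
  have hle : 1 + μ ≤ N * (1 + μ) := by
    nlinarith [hNpos]
  have : 1 / (N * (1 + μ)) ≤ 1 / (1 + μ) := by
    apply one_div_le_one_div_of_le h1μ hle
  linarith
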